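/- Suppose Δ_N restricted to D_0(N,k) is a linear automorphism (which holds since its eigenvalues -l(l+1), l ≥ 1, are nonzero). Then the flow of the quantized Euler equations Ẇ = [Δ_N^{-1} W, W] preserves D_0(N,k): if W(0) ∈ D_0(N,k), then W(t) ∈ D_0(N,k) for all t, since the vector field W ↦ [Δ_N^{-1}W, W] is tangent to the subalgebra D_0(N,k). -/

import Mathlib

open Matrix

attribute [local instance] Matrix.normedAddCommGroup Matrix.normedSpace
attribute [local instance] LieRing.ofAssociativeRing

lemma banded_mul {N k : ℕ} {A B : Matrix (Fin N) (Fin N) ℂ}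
    (hA : ∀ i j : Fin N, ¬ ((k : ℤ) ∣ ((i : ℤ) - (j : ℤ))) → A i j = 0)
    (hB : ∀ i j : Fin N, ¬ ((k : ℤ) ∣ ((i : ℤ) - (j : ℤ))) → B i j = 0) :
    ∀ i j : Fin N, ¬ ((k : ℤ) ∣ ((i : ℤ) - (j : ℤ))) → (A * B) i j = 0 := by
  intro i j h
  rw [Matrix.mul_apply]
  apply Finset.sum_eq_zero
  intro x _
  by_cases h1 : (k : ℤ) ∣ ((i : ℤ) - (x : ℤ))
  · by_cases h2 : (k : ℤ) ∣ ((x : ℤ) - (j : ℤ))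
    · exact absurd (by have := dvd_add h1 h2; simpa using this) h
    · rw [hB x j h2, mul_zero]
  · rw [hA i x h1, zero_mul]

/-- `D₀(N,k) = D(N,k) ∩ su(N)`: traceless skew-Hermitian matrices supported on
diagonals at multiples of `k`, as a real Lie subalgebra. -/
def D0Sub (N k : ℕ) : LieSubalgebra ℝ (Matrix (Fin N) (Fin N) ℂ) where
  carrier := {A | Aᴴ = -A ∧ A.trace = 0 ∧
      ∀ i j : Fin N, ¬ ((k : ℤ) ∣ ((i : ℤ) - (j : ℤ))) → A i j = 0}
  add_mem' := by
    intro A B hA hB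
    refine ⟨?_, ?_, ?_⟩
    · simp only [Matrix.conjTranspose_add, hA.1, hB.1]; abel
    · simp [Matrix.trace_add, hA.2.1, hB.2.1]
    · intro i j h
      simp [Matrix.add_apply, hA.2.2 i j h, hB.2.2 i j h]
  zero_mem' := ⟨by simp, by simp, fun i j _ => rfl⟩
  smul_mem' := by
    intro c A hA
    refine ⟨by simp [Matrix.conjTranspose_smul, hA.1], ?_, fun i j h => ?_⟩
    · rw [Matrix.trace_smul, hA.2.1, smul_zero]
    · simp [Matrix.smul_apply, hA.2.2 i j h]
  lie_mem' := by
    intro A B hA hB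
    refine ⟨?_, ?_, ?_⟩
    · simp only [Ring.lie_def, Matrix.conjTranspose_sub, Matrix.conjTranspose_mul, hA.1, hB.1]
      noncomm_ring
    · simp only [Ring.lie_def, Matrix.trace_sub, Matrix.trace_mul_comm A B, sub_self]
    · intro i j h
      simp only [Ring.lie_def, Matrix.sub_apply]
      rw [banded_mul hA.2.2 hB.2.2 i j h, banded_mul hB.2.2 hA.2.2 i j h, sub_zero]


section Aux

variable {E : Type*} [NormedAddCommGroup E] [NormedSpace ℝ E]

/-- Gronwall: a function with derivative bounded linearly by its norm and vanishing at 0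
vanishes on `[0, T]`. -/
lemma zero_of_deriv_bound_fwd {f f' : ℝ → E} (hf : ∀ t, HasDerivAt f (f' t) t)
    (h0 : f 0 = 0) {T K : ℝ} (hb : ∀ t ∈ Set.Icc (0 : ℝ) T, ‖f' t‖ ≤ K * ‖f t‖) :
    ∀ t ∈ Set.Icc (0 : ℝ) T, f t = 0 := by
  intro t ht
  have key := norm_le_gronwallBound_of_norm_deriv_right_le (f := f) (f' := f')
    (δ := 0) (K := K) (ε := 0) (a := 0) (b := T)
    (fun s _ => (hf s).continuousAt.continuousWithinAt)
    (fun s _ => (hf s).hasDerivWithinAt)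
    (by simp [h0])
    (fun s hs => by
      have := hb s ⟨hs.1, le_of_lt hs.2⟩
      linarith)
  have := key t ht
  rw [gronwallBound_ε0_δ0] at this
  exact norm_le_zero_iff.mp this

/-- Gronwall in both time directions. -/
lemma zero_of_deriv_bound {f f' : ℝ → E} (hf : ∀ t, HasDerivAt f (f' t) t)
    (h0 : f 0 = 0)
    (hb : ∀ T : ℝ, 0 < T → ∃ K : ℝ, ∀ t ∈ Set.Icc (-T) T, ‖f' t‖ ≤ K * ‖f t‖) :
    ∀ t, f t = 0 := by
  intro t
  obtain ⟨K, hK⟩ := hb (|t| + 1) (by positivity)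
  rcases le_or_gt 0 t with ht | ht
  · refine zero_of_deriv_bound_fwd hf h0 (T := |t| + 1) (K := K) ?_ t ?_
    · intro s hs
      exact hK s ⟨by linarith [hs.1, abs_nonneg t], hs.2⟩
    · constructor
      · exact ht
      · rw [abs_of_nonneg ht]; linarith
  · -- time reversal
    set g : ℝ → E := fun s => f (-s) with hg
    have hgd : ∀ s, HasDerivAt g ((-1 : ℝ) • f' (-s)) s := by
      intro s
      exact (hf (-s)).scomp s (hasDerivAt_neg s)
    have hg0 : g 0 = 0 := by simp [hg, h0]
    have : g (-t) = 0 := by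
      refine zero_of_deriv_bound_fwd hgd hg0 (T := |t| + 1) (K := K) ?_ (-t) ?_
      · intro s hs
        have h1 : -s ∈ Set.Icc (-(|t| + 1)) (|t| + 1) := by
          constructor
          · linarith [hs.2]
          · linarith [hs.1, abs_nonneg t]
        have := hK (-s) h1
        simpa [hg] using this
      · constructor
        · linarith
        · rw [abs_of_neg ht]; linarith
    simpa [hg] using this

end Aux

/-- The entrywise sup norm of a product of `N × N` matrices. -/
lemma norm_matrix_mul_le {N : ℕ} (A B : Matrix (Fin N) (Fin N) ℂ) :
    ‖A * B‖ ≤ (N : ℝ) * ‖A‖ * ‖B‖ := by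
  rw [Matrix.norm_le_iff (by positivity)]
  intro i j
  rw [Matrix.mul_apply]
  calc ‖∑ x, A i x * B x j‖ ≤ ∑ x, ‖A i x * B x j‖ := norm_sum_le _ _
    _ ≤ ∑ _x : Fin N, ‖A‖ * ‖B‖ := by
        refine Finset.sum_le_sum fun x _ => ?_
        rw [norm_mul]
        exact mul_le_mul (Matrix.norm_entry_le_entrywise_sup_norm A)
          (Matrix.norm_entry_le_entrywise_sup_norm B) (norm_nonneg _)
          (norm_nonneg _)
    _ = (N : ℝ) * ‖A‖ * ‖B‖ := by
        simp [Finset.sum_const, mul_assoc]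

noncomputable instance (N : ℕ) : NormedAddCommGroup (Matrix (Fin N) (Fin N) ℂ →L[ℝ] Matrix (Fin N) (Fin N) ℂ) :=
  ContinuousLinearMap.toNormedAddCommGroup

set_option maxHeartbeats 2000000

/-- Invariance of `D₀(N,k)` under the quantized Euler flow: if `Δ_N⁻¹` is a linear
operator preserving `D₀(N,k)` and `W : ℝ → su(N)` is a `C¹` solution of
`Ẇ = [Δ_N⁻¹ W, W]_N` (with `[A,B]_N = N^{3/2}(AB - BA)`) such that `W(0) ∈ D₀(N,k)`,
then `W(t) ∈ D₀(N,k)` for all `t`; indeed the vector field `W ↦ [Δ_N⁻¹ W, W]_N` is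
tangent to the Lie subalgebra `D₀(N,k)`. -/
theorem euler_flow_preserves_D0 (N k : ℕ) (hN : 1 ≤ N) (hk : 1 ≤ k) (hkN : k ≤ N)
    (Δinv : Matrix (Fin N) (Fin N) ℂ →ₗ[ℝ] Matrix (Fin N) (Fin N) ℂ)
    (hΔ : ∀ A ∈ D0Sub N k, Δinv A ∈ D0Sub N k)
    (W : ℝ → Matrix (Fin N) (Fin N) ℂ)
    (hW : ∀ t : ℝ, HasDerivAt W
      (((N : ℝ) ^ ((3 : ℝ) / 2)) • (Δinv (W t) * W t - W t * Δinv (W t))) t)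
    (hW0 : W 0 ∈ D0Sub N k) :
    (∀ A ∈ D0Sub N k,
      ((N : ℝ) ^ ((3 : ℝ) / 2)) • (Δinv A * A - A * Δinv A) ∈ D0Sub N k) ∧
    ∀ t : ℝ, W t ∈ D0Sub N k := by
  set c : ℝ := (N : ℝ) ^ ((3 : ℝ) / 2) with hcdef
  have hc0 : (0 : ℝ) ≤ c := by positivity
  have tangent : ∀ A ∈ D0Sub N k, c • (Δinv A * A - A * Δinv A) ∈ D0Sub N k := by
    intro A hA
    have h1 : Δinv A ∈ D0Sub N k := hΔ A hA
    have h2 : ⁅Δinv A, A⁆ ∈ D0Sub N k := (D0Sub N k).lie_mem h1 hA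
    have h3 := (D0Sub N k).smul_mem c h2
    rwa [Ring.lie_def] at h3
  refine ⟨tangent, ?_⟩
  -- set up a continuous linear projection whose kernel is D0Sub
  set S : Submodule ℝ (Matrix (Fin N) (Fin N) ℂ) := (D0Sub N k).toSubmodule with hSdef
  obtain ⟨q, hq⟩ := Submodule.exists_isCompl S
  set Qc : Matrix (Fin N) (Fin N) ℂ →L[ℝ] Matrix (Fin N) (Fin N) ℂ :=
    LinearMap.toContinuousLinearMap (q.subtype ∘ₗ q.projectionOnto S hq.symm) with hQdef
  have hQapp : ∀ x, Qc x = (q.projectionOnto S hq.symm x : Matrix (Fin N) (Fin N) ℂ) := by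
    intro x
    rw [hQdef, LinearMap.coe_toContinuousLinearMap']
    rfl
  have hQzero : ∀ x ∈ S, Qc x = 0 := by
    intro x hx
    rw [hQapp, Submodule.projectionOnto_apply_of_mem_right hq.symm hx]
    simp
  have hQsub : ∀ x, x - Qc x ∈ S := by
    intro x
    have hx := Submodule.projection_add_projection_eq_self hq x
    have h2 : x - Qc x = ((S.projectionOnto q hq) x : Matrix (Fin N) (Fin N) ℂ) := by
      rw [hQapp]
      exact sub_eq_iff_eq_add.mpr hx.symm
    rw [h2]
    exact ((S.projectionOnto q hq) x).2
  set Dc : Matrix (Fin N) (Fin N) ℂ →L[ℝ] Matrix (Fin N) (Fin N) ℂ :=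
    LinearMap.toContinuousLinearMap Δinv with hDdef
  have hDapp : ∀ x, Dc x = Δinv x := by
    intro x
    rw [hDdef, LinearMap.coe_toContinuousLinearMap']
  set F : Matrix (Fin N) (Fin N) ℂ → Matrix (Fin N) (Fin N) ℂ :=
    fun A => c • (Δinv A * A - A * Δinv A) with hFdef
  set f : ℝ → Matrix (Fin N) (Fin N) ℂ := fun t => Qc (W t) with hfdef
  set f' : ℝ → Matrix (Fin N) (Fin N) ℂ := fun t => Qc (F (W t)) with hf'def
  have hfd : ∀ t, HasDerivAt f (f' t) t := fun t => Qc.hasFDerivAt.comp_hasDerivAt t (hW t)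
  have hf0 : f 0 = 0 := hQzero _ hW0
  have hWc : Continuous W := by
    rw [continuous_iff_continuousAt]
    exact fun t => (hW t).differentiableAt.continuousAt
  have key : ∀ t, f t = 0 := by
    refine zero_of_deriv_bound hfd hf0 ?_
    intro T hT
    obtain ⟨R₀, hR₀⟩ := (isCompact_Icc (a := -T) (b := T)).exists_bound_of_continuousOn
      hWc.continuousOn
    set R : ℝ := max R₀ 0 with hRdef
    have hR : ∀ t ∈ Set.Icc (-T) T, ‖W t‖ ≤ R := fun t ht => (hR₀ t ht).trans (le_max_left _ _)
    have hRnn : (0 : ℝ) ≤ R := le_max_right _ _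
    have hDnn : (0 : ℝ) ≤ ‖Dc‖ := norm_nonneg _
    have hQnn : (0 : ℝ) ≤ ‖Qc‖ := norm_nonneg _
    have hNnn : (0 : ℝ) ≤ (N : ℝ) := Nat.cast_nonneg N
    set M : ℝ := (‖Dc‖ + 1) * ((‖Qc‖ + 1) * (R + 1)) with hMdef
    have hA : ‖Dc‖ * R ≤ M := by
      rw [hMdef]
      nlinarith [mul_nonneg hDnn hRnn, mul_nonneg hQnn hRnn, mul_nonneg hDnn hQnn, mul_nonneg (mul_nonneg hDnn hQnn) hRnn]
    have hB : ‖Dc‖ * (‖Qc‖ * R) ≤ M := by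
      rw [hMdef]
      nlinarith [mul_nonneg hDnn hRnn, mul_nonneg hQnn hRnn, mul_nonneg hDnn hQnn, mul_nonneg (mul_nonneg hDnn hQnn) hRnn]
    refine ⟨‖Qc‖ * (c * (6 * ((N : ℝ) * M))), ?_⟩
    intro t ht
    set u : Matrix (Fin N) (Fin N) ℂ := W t with hudef
    set qv : Matrix (Fin N) (Fin N) ℂ := Qc u with hqvdef
    set p : Matrix (Fin N) (Fin N) ℂ := u - qv with hpdef
    have hpS : p ∈ S := hQsub u
    have hFp : F p ∈ S := tangent p hpS
    have hQFp : Qc (F p) = 0 := hQzero _ hFp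
    have hFdiff : F u - F p = c • (Δinv u * qv + Δinv qv * u - Δinv qv * qv
        - (qv * Δinv u + u * Δinv qv - qv * Δinv qv)) := by
      have hFu : F u = c • (Δinv u * u - u * Δinv u) := rfl
      have hFp2 : F p = c • ((Δinv u - Δinv qv) * (u - qv) - (u - qv) * (Δinv u - Δinv qv)) := by
        show c • (Δinv p * p - p * Δinv p) = _
        rw [hpdef, map_sub]
      rw [hFu, hFp2, ← smul_sub]
      congr 1
      noncomm_ring
    have hQF : Qc (F u) = Qc (F u - F p) := by rw [map_sub, hQFp, sub_zero]
    -- norm estimates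
    have hu : ‖u‖ ≤ R := hR t ht
    have hqv : ‖qv‖ ≤ ‖Qc‖ * R := by
      calc ‖qv‖ ≤ ‖Qc‖ * ‖u‖ := Qc.le_opNorm u
        _ ≤ ‖Qc‖ * R := by gcongr
    have hdu : ‖Δinv u‖ ≤ ‖Dc‖ * R := by
      calc ‖Δinv u‖ = ‖Dc u‖ := by rw [hDapp]
        _ ≤ ‖Dc‖ * ‖u‖ := Dc.le_opNorm u
        _ ≤ ‖Dc‖ * R := by gcongr
    have hdq : ‖Δinv qv‖ ≤ ‖Dc‖ * ‖qv‖ := by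
      calc ‖Δinv qv‖ = ‖Dc qv‖ := by rw [hDapp]
        _ ≤ ‖Dc‖ * ‖qv‖ := Dc.le_opNorm qv
    have hduM : ‖Δinv u‖ ≤ M := hdu.trans hA
    have hdqM : ‖Δinv qv‖ ≤ M := by
      have : ‖Δinv qv‖ ≤ ‖Dc‖ * (‖Qc‖ * R) := hdq.trans (by gcongr)
      exact this.trans hB
    have h1 : ‖Δinv u * qv‖ ≤ (N : ℝ) * (M * ‖qv‖) := by
      calc ‖Δinv u * qv‖ ≤ (N : ℝ) * ‖Δinv u‖ * ‖qv‖ := norm_matrix_mul_le _ _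
        _ ≤ (N : ℝ) * M * ‖qv‖ := by gcongr
        _ = (N : ℝ) * (M * ‖qv‖) := by ring
    have h2 : ‖Δinv qv * u‖ ≤ (N : ℝ) * (M * ‖qv‖) := by
      calc ‖Δinv qv * u‖ ≤ (N : ℝ) * ‖Δinv qv‖ * ‖u‖ := norm_matrix_mul_le _ _
        _ ≤ (N : ℝ) * (‖Dc‖ * ‖qv‖) * R := by gcongr
        _ = (N : ℝ) * ((‖Dc‖ * R) * ‖qv‖) := by ring
        _ ≤ (N : ℝ) * (M * ‖qv‖) := by gcongr
    have h3 : ‖Δinv qv * qv‖ ≤ (N : ℝ) * (M * ‖qv‖) := by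
      calc ‖Δinv qv * qv‖ ≤ (N : ℝ) * ‖Δinv qv‖ * ‖qv‖ := norm_matrix_mul_le _ _
        _ ≤ (N : ℝ) * M * ‖qv‖ := by gcongr
        _ = (N : ℝ) * (M * ‖qv‖) := by ring
    have h4 : ‖qv * Δinv u‖ ≤ (N : ℝ) * (M * ‖qv‖) := by
      calc ‖qv * Δinv u‖ ≤ (N : ℝ) * ‖qv‖ * ‖Δinv u‖ := norm_matrix_mul_le _ _
        _ ≤ (N : ℝ) * ‖qv‖ * M := by gcongr
        _ = (N : ℝ) * (M * ‖qv‖) := by ring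
    have h5 : ‖u * Δinv qv‖ ≤ (N : ℝ) * (M * ‖qv‖) := by
      calc ‖u * Δinv qv‖ ≤ (N : ℝ) * ‖u‖ * ‖Δinv qv‖ := norm_matrix_mul_le _ _
        _ ≤ (N : ℝ) * R * (‖Dc‖ * ‖qv‖) := by gcongr
        _ = (N : ℝ) * ((‖Dc‖ * R) * ‖qv‖) := by ring
        _ ≤ (N : ℝ) * (M * ‖qv‖) := by gcongr
    have h6 : ‖qv * Δinv qv‖ ≤ (N : ℝ) * (M * ‖qv‖) := by
      calc ‖qv * Δinv qv‖ ≤ (N : ℝ) * ‖qv‖ * ‖Δinv qv‖ := norm_matrix_mul_le _ _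
        _ ≤ (N : ℝ) * ‖qv‖ * M := by gcongr
        _ = (N : ℝ) * (M * ‖qv‖) := by ring
    have hinner : ‖Δinv u * qv + Δinv qv * u - Δinv qv * qv
        - (qv * Δinv u + u * Δinv qv - qv * Δinv qv)‖ ≤ 6 * ((N : ℝ) * (M * ‖qv‖)) := by
      have e1 := norm_sub_le (Δinv u * qv + Δinv qv * u - Δinv qv * qv)
        (qv * Δinv u + u * Δinv qv - qv * Δinv qv)
      have e2 := norm_sub_le (Δinv u * qv + Δinv qv * u) (Δinv qv * qv)
      have e3 := norm_add_le (Δinv u * qv) (Δinv qv * u)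
      have e4 := norm_sub_le (qv * Δinv u + u * Δinv qv) (qv * Δinv qv)
      have e5 := norm_add_le (qv * Δinv u) (u * Δinv qv)
      linarith
    have step1 : f' t = Qc (F u - F p) := by rw [← hQF]
    have step2 : f t = qv := rfl
    calc ‖f' t‖ = ‖Qc (F u - F p)‖ := by rw [step1]
      _ ≤ ‖Qc‖ * ‖F u - F p‖ := Qc.le_opNorm _
      _ ≤ ‖Qc‖ * (c * (6 * ((N : ℝ) * (M * ‖qv‖)))) := by
          rw [hFdiff, norm_smul, Real.norm_eq_abs, abs_of_nonneg hc0]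
          gcongr
      _ = ‖Qc‖ * (c * (6 * ((N : ℝ) * M))) * ‖f t‖ := by rw [step2]; ring
  intro t
  have hq0 : Qc (W t) = 0 := key t
  have hmem := hQsub (W t)
  rw [hq0, sub_zero] at hmem
  exact hmem
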